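/- Let B be a finite type and let ρ, σ : Matrix B B ℂ be positive semidefinite matrices each of trace 1 (density matrices). If F(ρ, σ) = 1, then ρ = σ. (Fidelity equal to one forces the two density matrices to coincide; this is why fidelity exactly 1 characterizes perfect concealment.) -/

import Mathlib

open scoped ComplexOrder
open Matrix
open scoped MatrixOrder

noncomputable section

/-- Partial trace over `A` of the outer product `|ψ⟩⟨ψ|`:
`(ptrA ψ) j q = ∑ i, ψ (i, j) * conj (ψ (i, q))`. -/
def ptrA {A B : Type*} [Fintype A] (ψ : A × B → ℂ) : Matrix B B ℂ :=
  fun j q => ∑ i : A, ψ (i, j) * (starRingEnd ℂ) (ψ (i, q))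

/-- The Kronecker product `S ⊗ I` with the identity on `B`, as a matrix on `A × B`. -/
def kronId {A B : Type*} [DecidableEq B] (S : Matrix A A ℂ) : Matrix (A × B) (A × B) ℂ :=
  Matrix.kroneckerMap (· * ·) S (1 : Matrix B B ℂ)

/-- `ptrA ψ` is a Gram matrix, hence positive semidefinite. -/
lemma ptrA_posSemidef {A B : Type*} [Fintype A] [Fintype B] (ψ : A × B → ℂ) :
    (ptrA ψ).PosSemidef := by
  set V : Matrix A B ℂ := Matrix.of fun i j => (starRingEnd ℂ) (ψ (i, j)) with hV
  have h := Matrix.posSemidef_conjTranspose_mul_self V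
  have heq : ptrA ψ = Vᴴ * V := by
    ext j q
    simp [Matrix.mul_apply, Matrix.conjTranspose_apply, ptrA, hV, mul_comm]
  rw [heq]; exact h

lemma sqrt_mul_mul_sqrt_posSemidef {B : Type*} [Fintype B] [DecidableEq B]
    {ρ σ : Matrix B B ℂ} (hρ : ρ.PosSemidef) (hσ : σ.PosSemidef) :
    (CFC.sqrt ρ * σ * CFC.sqrt ρ).PosSemidef := by
  have h := hσ.mul_mul_conjTranspose_same (CFC.sqrt ρ)
  rwa [(CFC.sqrt_nonneg ρ).posSemidef.isHermitian.eq] at h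

/-- The fidelity `F(ρ, σ) = tr √(√ρ * σ * √ρ)` of two positive semidefinite matrices. -/
def fidelity {B : Type*} [Fintype B] [DecidableEq B] {ρ σ : Matrix B B ℂ}
    (hρ : ρ.PosSemidef) (hσ : σ.PosSemidef) : ℝ :=
  ((CFC.sqrt (CFC.sqrt ρ * σ * CFC.sqrt ρ)).trace).re


lemma trace_star_mul_self' {B : Type*} [Fintype B] (A : Matrix B B ℂ) :
    (star A * A).trace = ((∑ i, ∑ j, Complex.normSq (A i j) : ℝ) : ℂ) := by
  simp only [Matrix.trace, Matrix.diag, Matrix.mul_apply, Matrix.star_apply]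
  push_cast
  rw [Finset.sum_comm]
  congr 1; funext i; congr 1; funext j
  rw [Complex.normSq_eq_conj_mul_self]
  rfl

lemma eq_zero_of_trace_sum' {B : Type*} [Fintype B] (A C : Matrix B B ℂ)
    (h : (star A * A).trace + (star C * C).trace = 0) : A = 0 ∧ C = 0 := by
  rw [trace_star_mul_self', trace_star_mul_self', ← Complex.ofReal_add] at h
  have h' : (∑ i, ∑ j, Complex.normSq (A i j)) + (∑ i, ∑ j, Complex.normSq (C i j)) = 0 := by
    exact_mod_cast h
  have hA : ∀ (M : Matrix B B ℂ), (∑ i, ∑ j, Complex.normSq (M i j)) = 0 → M = 0 := by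
    intro M hM
    ext i j
    have h1 := (Finset.sum_eq_zero_iff_of_nonneg
      (fun i _ => Finset.sum_nonneg fun j _ => Complex.normSq_nonneg (M i j))).mp hM i (Finset.mem_univ i)
    have h2 := (Finset.sum_eq_zero_iff_of_nonneg
      (fun j _ => Complex.normSq_nonneg (M i j))).mp h1 j (Finset.mem_univ j)
    simpa using Complex.normSq_eq_zero.mp h2
  have n1 : 0 ≤ ∑ i, ∑ j, Complex.normSq (A i j) :=
    Finset.sum_nonneg fun i _ => Finset.sum_nonneg fun j _ => Complex.normSq_nonneg _
  have n2 : 0 ≤ ∑ i, ∑ j, Complex.normSq (C i j) :=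
    Finset.sum_nonneg fun i _ => Finset.sum_nonneg fun j _ => Complex.normSq_nonneg _
  exact ⟨hA A (by linarith), hA C (by linarith)⟩

lemma fidelity_key {B : Type*} [Fintype B] [DecidableEq B]
    {ρ σ R S T : Matrix B B ℂ}
    (hR : Rᴴ = R) (hS : Sᴴ = S) (hR2 : R * R = ρ) (hS2 : S * S = σ)
    (hT : T.PosSemidef) (hT2 : T * T = R * σ * R)
    (htρ : ρ.trace = 1) (htσ : σ.trace = 1) (htT : T.trace = 1) : ρ = σ := by
  have hH : T.IsHermitian := hT.1
  set U : Matrix B B ℂ := ↑(Matrix.IsHermitian.eigenvectorUnitary hH) with hUdef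
  have hU2 : star U * U = 1 :=
    (Matrix.mem_unitaryGroup_iff').mp (Matrix.IsHermitian.eigenvectorUnitary hH).2
  set cnj : (B → ℂ) → Matrix B B ℂ := fun f => U * Matrix.diagonal f * star U with hcnjdef
  have hcnj : ∀ f g : B → ℂ, cnj f * cnj g = cnj (f * g) := by
    intro f g
    calc (U * Matrix.diagonal f * star U) * (U * Matrix.diagonal g * star U)
        = U * Matrix.diagonal f * (star U * U) * Matrix.diagonal g * star U := by
          simp only [Matrix.mul_assoc]
      _ = U * (Matrix.diagonal f * Matrix.diagonal g) * star U := by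
          rw [hU2, Matrix.mul_one, Matrix.mul_assoc U]
      _ = U * Matrix.diagonal (f * g) * star U := by rw [Matrix.diagonal_mul_diagonal]; rfl
  have hstar : ∀ f : B → ℂ, (∀ i, star (f i) = f i) → star (cnj f) = cnj f := by
    intro f hf
    have hd : star (Matrix.diagonal f) = Matrix.diagonal f := by
      rw [Matrix.star_eq_conjTranspose, Matrix.diagonal_conjTranspose]
      apply congrArg
      funext i
      exact hf i
    calc star (U * Matrix.diagonal f * star U)
        = star (star U) * (star (Matrix.diagonal f) * star U) := by
          rw [Matrix.star_mul, Matrix.star_mul]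
      _ = U * Matrix.diagonal f * star U := by rw [star_star, hd, Matrix.mul_assoc]
  set e : B → ℝ := hH.eigenvalues with hedef
  set a : B → ℂ := fun i => ((e i : ℝ) : ℂ) with hadef
  set b : B → ℂ := fun i => (((if e i = 0 then 0 else (e i)⁻¹ : ℝ)) : ℂ) with hbdef
  have hTc : T = cnj a := by
    have := hH.spectral_theorem
    rw [hcnjdef]
    rw [Unitary.conjStarAlgAut_apply] at this
    exact this
  have hGs : star (cnj b) = cnj b := hstar b fun i => by
    simp only [hbdef]
    exact Complex.conj_ofReal _
  have has : star (cnj a) = cnj a := hstar a fun i => by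
    simp only [hadef]
    exact Complex.conj_ofReal _
  -- function identities
  have hfun1 : b * (a * a) = a := by
    funext i
    by_cases h : e i = 0
    · simp [hadef, hbdef, h]
    · simp only [Pi.mul_apply, hadef, hbdef, if_neg h]
      push_cast
      field_simp
  have hfun2 : (b * b) * (a * a) * (b * b) = b * b := by
    funext i
    by_cases h : e i = 0
    · simp [hadef, hbdef, h]
    · simp only [Pi.mul_apply, hadef, hbdef, if_neg h]
      push_cast
      field_simp
  -- set up W, Q
  set G := cnj b with hGdef
  set W := (S * R) * G with hWdef
  have hNs : star (S * R) = R * S := by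
    rw [Matrix.star_mul, Matrix.star_eq_conjTranspose, Matrix.star_eq_conjTranspose, hR, hS]
  have hNN : (R * S) * (S * R) = cnj (a * a) := by
    calc (R * S) * (S * R) = R * (S * S) * R := by simp only [Matrix.mul_assoc]
      _ = R * σ * R := by rw [hS2]
      _ = T * T := hT2.symm
      _ = cnj a * cnj a := by rw [hTc]
      _ = cnj (a * a) := hcnj a a
  have hWs : star W = G * (R * S) := by
    rw [hWdef, Matrix.star_mul, hNs, hGs]
  have hWN : star W * (S * R) = T := by
    calc star W * (S * R) = G * ((R * S) * (S * R)) := by rw [hWs, Matrix.mul_assoc]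
      _ = cnj b * cnj (a * a) := by rw [hNN]
      _ = cnj (b * (a * a)) := hcnj _ _
      _ = T := by rw [hfun1, hTc]
  set Q := W * star W with hQdef
  have hQe : Q = (S * R) * cnj (b * b) * (R * S) := by
    calc W * star W = (S * R) * (G * G) * (R * S) := by
          rw [hWs, hWdef]; simp only [Matrix.mul_assoc]
      _ = (S * R) * cnj (b * b) * (R * S) := by rw [hGdef, hcnj]
  have hQs : star Q = Q := by rw [hQdef, Matrix.star_mul, star_star]
  have hQQ : Q * Q = Q := by
    calc Q * Q = (S * R) * (cnj (b * b) * ((R * S) * (S * R)) * cnj (b * b)) * (R * S) := by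
          rw [hQe]; simp only [Matrix.mul_assoc]
      _ = (S * R) * (cnj (b * b) * cnj (a * a) * cnj (b * b)) * (R * S) := by rw [hNN]
      _ = (S * R) * cnj ((b * b) * (a * a) * (b * b)) * (R * S) := by
          rw [hcnj, hcnj]
      _ = (S * R) * cnj (b * b) * (R * S) := by rw [hfun2]
      _ = Q := hQe.symm
  -- X and Z
  set X := S * W with hXdef
  have hXs : star X = star W * S := by
    rw [hXdef, Matrix.star_mul, Matrix.star_eq_conjTranspose S, hS]
  have hXT : star X * R = T := by
    rw [hXs, Matrix.mul_assoc]; exact hWN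
  have hXX : star X * X = star W * σ * W := by
    calc star X * X = star W * (S * S) * W := by
          rw [hXs, hXdef]; simp only [Matrix.mul_assoc]
      _ = star W * σ * W := by rw [hS2]
  set Z := (1 - Q) * S with hZdef
  have hZZ : star Z * Z = σ - S * Q * S := by
    have h1Q : star (1 - Q) = 1 - Q := by rw [star_sub, star_one, hQs]
    have hQQ' : (1 - Q) * (1 - Q) = 1 - Q := by
      rw [sub_mul, one_mul, mul_sub, mul_one, hQQ]
      abel
    calc star Z * Z = S * ((1 - Q) * (1 - Q)) * S := by
          rw [hZdef, Matrix.star_mul, Matrix.star_eq_conjTranspose S, hS, h1Q]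
          simp only [Matrix.mul_assoc]
      _ = S * (1 - Q) * S := by rw [hQQ']
      _ = σ - S * Q * S := by
          rw [Matrix.mul_sub, Matrix.mul_one, Matrix.sub_mul, hS2]
  -- traces
  have t1 : (star X * R).trace = 1 := by rw [hXT, htT]
  have t2 : (star R * X).trace = 1 := by
    have : star R * X = star (star X * R) := by
      rw [Matrix.star_mul, star_star]
    rw [this, Matrix.star_eq_conjTranspose, Matrix.trace_conjTranspose, t1]
    exact star_one _
  have t3 : (star R * R).trace = 1 := by
    rw [Matrix.star_eq_conjTranspose, hR, hR2, htρ]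
  have tXX : (star X * X).trace = (Q * σ).trace := by
    rw [hXX, Matrix.trace_mul_cycle, hQdef]
  have tZZ : (star Z * Z).trace = 1 - (star X * X).trace := by
    rw [hZZ, Matrix.trace_sub, htσ, tXX]
    congr 1
    rw [Matrix.trace_mul_cycle, hS2, Matrix.trace_mul_comm]
  have texp : (star (X - R) * (X - R)).trace = (star X * X).trace - 1 := by
    have : star (X - R) * (X - R)
        = star X * X - star X * R - (star R * X - star R * R) := by
      rw [star_sub, sub_mul, mul_sub, mul_sub]
    rw [this, Matrix.trace_sub, Matrix.trace_sub, Matrix.trace_sub, t1, t2, t3]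
    ring
  have hsum : (star (X - R) * (X - R)).trace + (star Z * Z).trace = 0 := by
    rw [texp, tZZ]; ring
  obtain ⟨hD0, hZ0⟩ := eq_zero_of_trace_sum' _ _ hsum
  have hXR : X = R := by
    have := sub_eq_zero.mp hD0
    exact this
  have hρQ : ρ = S * Q * S := by
    have hXX' : X * star X = S * Q * S := by
      rw [hXdef, Matrix.star_mul, Matrix.star_eq_conjTranspose S, hS, hQdef]
      simp only [Matrix.mul_assoc]
    rw [← hXX', hXR]
    rw [Matrix.star_eq_conjTranspose, hR, hR2]
  have hσQ : σ - S * Q * S = 0 := by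
    rw [← hZZ, hZ0]
    simp
  rw [hρQ, ← sub_eq_zero]
  rw [← neg_sub]
  rw [hσQ]
  simp

/-- Fidelity equal to one forces the two density matrices to coincide. -/
theorem fidelity_eq_one_iff_eq
    {B : Type*} [Fintype B] [DecidableEq B]
    {ρ σ : Matrix B B ℂ} (hρ : ρ.PosSemidef) (hσ : σ.PosSemidef)
    (htρ : ρ.trace = 1) (htσ : σ.trace = 1)
    (hF : fidelity hρ hσ = 1) : ρ = σ := by
  have hM := sqrt_mul_mul_sqrt_posSemidef hρ hσ
  have hT : (CFC.sqrt (CFC.sqrt ρ * σ * CFC.sqrt ρ)).PosSemidef := (CFC.sqrt_nonneg _).posSemidef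
  have him : ((CFC.sqrt (CFC.sqrt ρ * σ * CFC.sqrt ρ)).trace).im = 0 := by
    have h1 : star (CFC.sqrt (CFC.sqrt ρ * σ * CFC.sqrt ρ)).trace = (CFC.sqrt (CFC.sqrt ρ * σ * CFC.sqrt ρ)).trace := by
      rw [← Matrix.trace_conjTranspose, hT.1.eq]
    exact Complex.conj_eq_iff_im.mp h1
  have htT : (CFC.sqrt (CFC.sqrt ρ * σ * CFC.sqrt ρ)).trace = 1 := by
    apply Complex.ext
    · exact hF
    · rw [him]; rfl
  exact fidelity_key (CFC.sqrt_nonneg ρ).posSemidef.1.eq (CFC.sqrt_nonneg σ).posSemidef.1.eq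
    (CFC.sqrt_mul_sqrt_self ρ hρ.nonneg) (CFC.sqrt_mul_sqrt_self σ hσ.nonneg) hT
    (CFC.sqrt_mul_sqrt_self _ hM.nonneg) htρ htσ htT
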